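/- Let L be a bounded distributive lattice and let a_1 ≤ a_2 ≤ ... ≤ a_{n+1} and b_1 ≥ b_2 ≥ ... ≥ b_{n+1} be elements of L with a_{n+1} ≥ b_{n+1}. Then the join over i ∈ [n+1] of (a_i ∧ b_i) equals the median of the 2n+1 elements a_1, ..., a_n, b_1, ..., b_{n+1}, where the median of 2n+1 elements is the join over all (n+1)-element subsets I of the meet of the elements indexed by I. -/

import Mathlib

/-- Lemma on standard simplices (Dubois–Prade): the join of a_i ∧ b_i
equals the median of the 2n+1 elements a_1,...,a_n,b_1,...,b_{n+1}. -/
theorem stmt0 {L : Type*} [DistribLattice L] [BoundedOrder L] {n : ℕ}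
    (a b : Fin (n + 1) → L) (ha : Monotone a) (hb : Antitone b)
    (hab : b (Fin.last n) ≤ a (Fin.last n)) :
    (Finset.univ.sup fun i => a i ⊓ b i) =
      ((Finset.univ : Finset (Fin (2 * n + 1))).powerset.filter
        fun I => I.card = n + 1).sup
        (fun I => I.inf fun j =>
          if h : (j : ℕ) < n then a ⟨j, by omega⟩
          else b ⟨(j : ℕ) - n, by have := j.isLt; omega⟩) := by
  apply le_antisymm
  · refine Finset.sup_le fun i _ => ?_
    have hlt : ∀ m ∈ Finset.Icc (i : ℕ) (n + (i : ℕ)), m < 2 * n + 1 := by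
      intro m hm
      rw [Finset.mem_Icc] at hm
      have := i.isLt
      omega
    have hmem : (Finset.Icc (i : ℕ) (n + (i : ℕ))).attachFin hlt ∈
        ((Finset.univ : Finset (Fin (2 * n + 1))).powerset.filter
          fun I => I.card = n + 1) := by
      simp only [Finset.mem_filter, Finset.mem_powerset, Finset.subset_univ, true_and,
        Finset.card_attachFin, Nat.card_Icc]
      omega
    refine le_trans ?_ (Finset.le_sup hmem)
    refine Finset.le_inf fun j hj => ?_
    rw [Finset.mem_attachFin, Finset.mem_Icc] at hj
    by_cases h : (j : ℕ) < n
    · rw [dif_pos h]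
      refine inf_le_left.trans (ha ?_)
      simpa [Fin.le_def] using hj.1
    · rw [dif_neg h]
      refine inf_le_right.trans (hb ?_)
      simp only [Fin.le_def]
      omega
  · refine Finset.sup_le fun I hI => ?_
    simp only [Finset.mem_filter, Finset.mem_powerset] at hI
    obtain ⟨-, hcard⟩ := hI
    -- there is a b-position in I
    have hTne : ∃ j ∈ I, n ≤ (j : ℕ) := by
      by_contra h
      push_neg at h
      have hle : I.card ≤ (Finset.range n).card := by
        refine Finset.card_le_card_of_injOn Fin.val (fun x hx => ?_)
          (Fin.val_injective.injOn)
        rw [Finset.coe_range, Set.mem_Iio]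
        exact h x hx
      rw [hcard, Finset.card_range] at hle
      omega
    classical
    set T := (I.filter fun j : Fin (2 * n + 1) => n ≤ (j : ℕ)).image (fun j : Fin (2 * n + 1) => (j : ℕ) - n) with hT
    have hTne' : T.Nonempty := by
      obtain ⟨j, hjI, hjn⟩ := hTne
      exact ⟨(j : ℕ) - n, Finset.mem_image.2 ⟨j, Finset.mem_filter.2 ⟨hjI, hjn⟩, rfl⟩⟩
    set t := T.max' hTne' with ht
    have htmem : t ∈ T := T.max'_mem _
    rw [hT, Finset.mem_image] at htmem
    obtain ⟨j, hjmem, hjt⟩ := htmem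
    rw [Finset.mem_filter] at hjmem
    obtain ⟨hjI, hjn⟩ := hjmem
    have htmax : ∀ x ∈ I, n ≤ (x : ℕ) → (x : ℕ) - n ≤ t := by
      intro x hx hxn
      exact T.le_max' _ (Finset.mem_image.2 ⟨x, Finset.mem_filter.2 ⟨hx, hxn⟩, rfl⟩)
    have htn : t ≤ n := by
      have := j.isLt
      omega
    by_cases hp : ∃ p ∈ I, (p : ℕ) < n ∧ (p : ℕ) ≤ t
    · obtain ⟨p, hpI, hpn, hpt⟩ := hp
      have h1 : (I.inf fun j =>
          if h : (j : ℕ) < n then a ⟨j, by omega⟩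
          else b ⟨(j : ℕ) - n, by have := j.isLt; omega⟩) ≤ a ⟨(p : ℕ), by omega⟩ := by
        refine (Finset.inf_le hpI).trans ?_
        simp only [dif_pos hpn]
        exact le_rfl
      have h2 : (I.inf fun j =>
          if h : (j : ℕ) < n then a ⟨j, by omega⟩
          else b ⟨(j : ℕ) - n, by have := j.isLt; omega⟩) ≤ b ⟨(p : ℕ), by omega⟩ := by
        refine (Finset.inf_le hjI).trans ?_
        rw [dif_neg (by omega)]
        refine hb ?_
        simp only [Fin.le_def]
        omega
      exact le_trans (le_inf h1 h2)
        (Finset.le_sup (f := fun i => a i ⊓ b i) (Finset.mem_univ (⟨(p : ℕ), by omega⟩ : Fin (n + 1))))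
    · push_neg at hp
      have htn' : t = n := by
        by_contra hne
        have htlt : t < n := lt_of_le_of_ne htn hne
        have hsub : ∀ x ∈ I, (x : ℕ) ∈ Finset.Ioo t n ∪ Finset.Icc n (n + t) := by
          intro x hx
          rw [Finset.mem_union, Finset.mem_Ioo, Finset.mem_Icc]
          by_cases hxn : (x : ℕ) < n
          · exact Or.inl ⟨hp x hx hxn, hxn⟩
          · have := htmax x hx (by omega)
            exact Or.inr ⟨by omega, by omega⟩
        have hle := Finset.card_le_card_of_injOn Fin.val (fun x hx => hsub x hx) (Fin.val_injective.injOn)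
        have hun := Finset.card_union_le (Finset.Ioo t n) (Finset.Icc n (n + t))
        rw [hcard] at hle
        rw [Nat.card_Ioo, Nat.card_Icc] at hun
        omega
      -- t = n, so j = 2n and inf ≤ b_n ≤ a_n
      have hj2n : (j : ℕ) = 2 * n := by
        have := j.isLt
        omega
      have h2 : (I.inf fun j =>
          if h : (j : ℕ) < n then a ⟨j, by omega⟩
          else b ⟨(j : ℕ) - n, by have := j.isLt; omega⟩) ≤ b (Fin.last n) := by
        refine (Finset.inf_le hjI).trans ?_
        rw [dif_neg (by omega)]
        refine le_of_eq (congrArg b ?_)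
        ext
        simp [Fin.last]
        omega
      exact le_trans (le_inf (h2.trans hab) h2)
        (Finset.le_sup (f := fun i => a i ⊓ b i) (Finset.mem_univ (Fin.last n)))
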